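/- Let K be a field of characteristic zero, let k ≥ 1, and let t_1, …, t_k be nonzero elements of K such that t_1 t_2 ⋯ t_k = 1 and such that t_{c+1} t_{c+2} ⋯ t_b ≠ 1 for all 1 ≤ c < b ≤ k. Let p(x) be a Laurent polynomial over K such that (1 − t_a·x) divides p(x) for every a ∈ {1, …, k}. Say that a symmetric Laurent polynomial R in n variables satisfies the wheel condition if, whenever n ≥ k, the Laurent polynomial obtained from R by substituting z_a := w · t_2 t_3 ⋯ t_a for a = 1, …, k (where w is a new variable, the product being empty for a = 1, and the remaining variables z_{k+1}, …, z_n left free) is identically zero. Then the wheel condition is preserved by the shuffle product: if R (in n variables) and R' (in n' variables) are symmetric Laurent polynomials satisfying the wheel condition, then the symmetric Laurent polynomial G(z_1, …, z_{n+n'}) := ∑_{σ ∈ S_{n+n'}} σ·[ R(z_1,…,z_n) · R'(z_{n+1},…,z_{n+n'}) · ∏_{1 ≤ a ≤ n < b ≤ n+n'} p(z_a/z_b) · z_b/(z_b − z_a) ] also satisfies the wheel condition. -/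

import Mathlib

open MvPolynomial

noncomputable section

set_option maxHeartbeats 1000000
set_option synthInstance.maxHeartbeats 200000



/-- The field of rational functions over `K` in countably many variables `z₀, z₁, z₂, …`. -/
abbrev Fld (K : Type*) [Field K] := FractionRing (MvPolynomial ℕ K)

/-- The generic variable `z_i`. -/
def ZZ (K : Type*) [Field K] (i : ℕ) : Fld K :=
  algebraMap (MvPolynomial ℕ K) (Fld K) (X i)

/-- Evaluation of a one-variable Laurent polynomial `p` over `K` at a rational function. -/
def lEv (K : Type*) [Field K] (p : LaurentPolynomial K) (x : Fld K) : Fld K :=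
  Finsupp.sum (AddMonoidAlgebra.coeff p) fun m c => algebraMap K (Fld K) c * x ^ m

/-- Evaluation of the Laurent polynomial in `n` variables with coefficient function `R` at
the point `v`. -/
def evF (K : Type*) [Field K] {n : ℕ} (R : (Fin n → ℤ) →₀ K) (v : Fin n → Fld K) : Fld K :=
  Finsupp.sum R fun e c => algebraMap K (Fld K) c * ∏ i, v i ^ e i

/-- The wheel condition for the parameters `t 1, …, t k`: whenever `m ≥ k`, substituting
`z_a := w · t 2 ⋯ t a` for `a = 1, …, k` (the variable `w` and the remaining variables
`z_{k+1}, …, z_m` being left generic) into the `m`-variable Laurent polynomial with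
coefficient function `C` yields the identically zero Laurent polynomial. -/
def WheelCond (K : Type*) [Field K] (k : ℕ) (t : ℕ → K) {m : ℕ}
    (C : (Fin m → ℤ) →₀ K) : Prop :=
  k ≤ m →
    evF K C (fun a =>
      if a.val < k then
        algebraMap K (Fld K) (∏ j ∈ Finset.Icc 2 (a.val + 1), t j) * ZZ K m
      else ZZ K a.val) = 0

namespace S7

variable {K : Type*} [Field K]

lemma im_inj : Function.Injective (algebraMap (MvPolynomial ℕ K) (Fld K)) :=
  IsFractionRing.injective _ _

lemma tower_eq (c : K) :
    algebraMap K (Fld K) c = algebraMap (MvPolynomial ℕ K) (Fld K) (C c) := by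
  rw [IsScalarTower.algebraMap_apply K (MvPolynomial ℕ K) (Fld K)]
  rfl

lemma ZZ_ne_zero (i : ℕ) : ZZ K i ≠ 0 := by
  intro h
  have : (X i : MvPolynomial ℕ K) = 0 := im_inj (by rw [map_zero]; exact h)
  exact MvPolynomial.X_ne_zero (σ := ℕ) (R := K) i this

lemma ZZ_ne {i j : ℕ} (h : i ≠ j) : ZZ K i ≠ ZZ K j := by
  simp only [ZZ, ne_eq]
  intro hh
  exact h (X_injective (im_inj hh))

/-! ### The specialization relation -/

def Spz (ψ : MvPolynomial ℕ K →+* Fld K) (x y : Fld K) : Prop :=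
  ∃ f g : MvPolynomial ℕ K, ψ g ≠ 0 ∧
    algebraMap (MvPolynomial ℕ K) (Fld K) g * x = algebraMap (MvPolynomial ℕ K) (Fld K) f ∧
    ψ g * y = ψ f

variable {ψ : MvPolynomial ℕ K →+* Fld K}

lemma spz_map (f : MvPolynomial ℕ K) : Spz ψ (algebraMap _ _ f) (ψ f) :=
  ⟨f, 1, by simp, by simp, by simp⟩

lemma spz_one : Spz ψ 1 1 := by simpa using spz_map (ψ := ψ) 1

lemma spz_constK (hψC : ∀ c : K, ψ (C c) = algebraMap K (Fld K) c) (c : K) :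
    Spz ψ (algebraMap K (Fld K) c) (algebraMap K (Fld K) c) := by
  have := spz_map (ψ := ψ) (C c)
  rwa [← tower_eq, hψC] at this

lemma spz_mul {x y x' y' : Fld K} (h : Spz ψ x y) (h' : Spz ψ x' y') :
    Spz ψ (x * x') (y * y') := by
  obtain ⟨f, g, hg, h1, h2⟩ := h
  obtain ⟨f', g', hg', h1', h2'⟩ := h'
  refine ⟨f * f', g * g', by simp [hg, hg'], ?_, ?_⟩
  · rw [map_mul, map_mul, mul_mul_mul_comm, h1, h1']
  · rw [map_mul, map_mul, mul_mul_mul_comm, h2, h2']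

lemma spz_add {x y x' y' : Fld K} (h : Spz ψ x y) (h' : Spz ψ x' y') :
    Spz ψ (x + x') (y + y') := by
  obtain ⟨f, g, hg, h1, h2⟩ := h
  obtain ⟨f', g', hg', h1', h2'⟩ := h'
  refine ⟨f * g' + f' * g, g * g', by simp [hg, hg'], ?_, ?_⟩
  · simp only [map_add, map_mul]
    linear_combination algebraMap (MvPolynomial ℕ K) (Fld K) g' * h1 +
      algebraMap (MvPolynomial ℕ K) (Fld K) g * h1'
  · simp only [map_add, map_mul]
    linear_combination ψ g' * h2 + ψ g * h2'

lemma spz_neg {x y : Fld K} (h : Spz ψ x y) : Spz ψ (-x) (-y) := by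
  obtain ⟨f, g, hg, h1, h2⟩ := h
  exact ⟨-f, g, hg, by rw [map_neg, ← h1]; ring, by rw [map_neg, ← h2]; ring⟩

lemma spz_sub {x y x' y' : Fld K} (h : Spz ψ x y) (h' : Spz ψ x' y') :
    Spz ψ (x - x') (y - y') := by
  simpa [sub_eq_add_neg] using spz_add h (spz_neg h')

lemma spz_inv {x y : Fld K} (h : Spz ψ x y) (hy : y ≠ 0) : Spz ψ x⁻¹ y⁻¹ := by
  obtain ⟨f, g, hg, h1, h2⟩ := h
  have hf : ψ f ≠ 0 := by
    rw [← h2]; exact mul_ne_zero hg hy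
  have hf0 : f ≠ 0 := fun hf0 => hf (by simp [hf0])
  have hif : algebraMap (MvPolynomial ℕ K) (Fld K) f ≠ 0 := by
    simpa [map_eq_zero_iff _ im_inj] using hf0
  have hx : x ≠ 0 := by
    rintro rfl; rw [mul_zero] at h1; exact hif h1.symm
  refine ⟨g, f, hf, ?_, ?_⟩
  · rw [← h1, mul_assoc, mul_inv_cancel₀ hx, mul_one]
  · rw [← h2, mul_assoc, mul_inv_cancel₀ hy, mul_one]

lemma spz_pow {x y : Fld K} (h : Spz ψ x y) (e : ℕ) : Spz ψ (x ^ e) (y ^ e) := by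
  induction e with
  | zero => simpa using spz_one
  | succ e ih => rw [pow_succ, pow_succ]; exact spz_mul ih h

lemma spz_zpow {x y : Fld K} (h : Spz ψ x y) (hy : y ≠ 0) (e : ℤ) :
    Spz ψ (x ^ e) (y ^ e) := by
  cases e with
  | ofNat e => simpa [zpow_natCast] using spz_pow h e
  | negSucc e =>
      simp only [zpow_negSucc]
      exact spz_inv (spz_pow h (e + 1)) (pow_ne_zero _ hy)

lemma spz_div {x y x' y' : Fld K} (h : Spz ψ x y) (h' : Spz ψ x' y') (hy' : y' ≠ 0) :
    Spz ψ (x / x') (y / y') := by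
  rw [div_eq_mul_inv, div_eq_mul_inv]
  exact spz_mul h (spz_inv h' hy')

lemma spz_sum {α : Type*} (s : Finset α) (F G : α → Fld K)
    (h : ∀ a ∈ s, Spz ψ (F a) (G a)) :
    Spz ψ (∑ a ∈ s, F a) (∑ a ∈ s, G a) := by
  classical
  induction s using Finset.cons_induction with
  | empty => simpa using spz_sub (spz_one (ψ := ψ)) spz_one
  | cons a s ha ih =>
      rw [Finset.sum_cons, Finset.sum_cons]
      exact spz_add (h a (Finset.mem_cons_self a s)) (ih fun b hb => h b (Finset.mem_cons_of_mem hb))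

lemma spz_prod {α : Type*} (s : Finset α) (F G : α → Fld K)
    (h : ∀ a ∈ s, Spz ψ (F a) (G a)) :
    Spz ψ (∏ a ∈ s, F a) (∏ a ∈ s, G a) := by
  classical
  induction s using Finset.cons_induction with
  | empty => simpa using spz_one (ψ := ψ)
  | cons a s ha ih =>
      rw [Finset.prod_cons, Finset.prod_cons]
      exact spz_mul (h a (Finset.mem_cons_self a s)) (ih fun b hb => h b (Finset.mem_cons_of_mem hb))

lemma spz_unique {x y y' : Fld K} (h : Spz ψ x y) (h' : Spz ψ x y') : y = y' := by
  obtain ⟨f, g, hg, h1, h2⟩ := h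
  obtain ⟨f', g', hg', h1', h2'⟩ := h'
  have key : g' * f = g * f' := by
    apply im_inj
    rw [map_mul, map_mul, ← h1, ← h1']
    ring
  have key2 : ψ g' * ψ f = ψ g * ψ f' := by
    rw [← map_mul, ← map_mul, key]
  have : (ψ g * ψ g') * y = (ψ g * ψ g') * y' := by
    calc (ψ g * ψ g') * y = ψ g' * (ψ g * y) := by ring
    _ = ψ g' * ψ f := by rw [h2]
    _ = ψ g * ψ f' := key2
    _ = ψ g * (ψ g' * y') := by rw [h2']
    _ = (ψ g * ψ g') * y' := by ring
  exact mul_left_cancel₀ (mul_ne_zero hg hg') this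

lemma spz_evF (hψC : ∀ c : K, ψ (C c) = algebraMap K (Fld K) c) {n : ℕ}
    (R : (Fin n → ℤ) →₀ K) (v w : Fin n → Fld K)
    (hvw : ∀ i, Spz ψ (v i) (w i)) (hw : ∀ i, w i ≠ 0) :
    Spz ψ (evF K R v) (evF K R w) := by
  unfold evF Finsupp.sum
  apply spz_sum
  intro e _
  exact spz_mul (spz_constK hψC _)
    (spz_prod _ _ _ fun i _ => spz_zpow (hvw i) (hw i) (e i))

lemma spz_lEv (hψC : ∀ c : K, ψ (C c) = algebraMap K (Fld K) c)
    (p : LaurentPolynomial K) {x y : Fld K} (h : Spz ψ x y) (hy : y ≠ 0) :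
    Spz ψ (lEv K p x) (lEv K p y) := by
  unfold lEv Finsupp.sum
  apply spz_sum
  intro e _
  exact spz_mul (spz_constK hψC _) (spz_zpow h hy e)

/-! ### `lEv` as a ring hom in `p` -/

def zmh (x : Fld K) (hx : x ≠ 0) : Multiplicative ℤ →* Fld K where
  toFun e := x ^ (Multiplicative.toAdd e)
  map_one' := by simp
  map_mul' a b := by
    show x ^ (Multiplicative.toAdd a + Multiplicative.toAdd b) = _
    exact zpow_add₀ hx _ _

def lEvHom (x : Fld K) (hx : x ≠ 0) : LaurentPolynomial K →+* Fld K :=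
  AddMonoidAlgebra.liftNCRingHom (algebraMap K (Fld K)) (zmh x hx) fun _ _ => Commute.all _ _

lemma lEv_single (x : Fld K) (m : ℤ) (c : K) :
    lEv K (AddMonoidAlgebra.single m c) x = algebraMap K (Fld K) c * x ^ m := by
  unfold lEv
  exact Finsupp.sum_single_index (h := fun m c => algebraMap K (Fld K) c * x ^ m) (by simp)

lemma lEv_eq (p : LaurentPolynomial K) (x : Fld K) (hx : x ≠ 0) :
    lEv K p x = lEvHom x hx p := by
  induction p using AddMonoidAlgebra.induction with
  | zero => simp [lEv]
  | single_add a b f haf hb ih =>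
      have hadd : lEv K (AddMonoidAlgebra.single a b + f) x = lEv K (AddMonoidAlgebra.single a b) x + lEv K f x := by
        unfold lEv
        rw [AddMonoidAlgebra.coeff_add]
        apply Finsupp.sum_add_index
        · intro m _; simp
        · intro m _ c d; rw [map_add]; ring
      rw [hadd, map_add, ih, lEv_single]
      congr 1
      show _ = AddMonoidAlgebra.liftNC _ _ _
      rw [AddMonoidAlgebra.liftNC_single]
      rfl

lemma lEv_mul (p q : LaurentPolynomial K) (x : Fld K) (hx : x ≠ 0) :
    lEv K (p * q) x = lEv K p x * lEv K q x := by
  rw [lEv_eq p x hx, lEv_eq q x hx, lEv_eq (p*q) x hx, map_mul]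

lemma lEv_vanish {a : K} (ha : a ≠ 0) {p : LaurentPolynomial K}
    (hd : (1 - LaurentPolynomial.C a * LaurentPolynomial.T 1) ∣ p) :
    lEv K p (algebraMap K (Fld K) a⁻¹) = 0 := by
  obtain ⟨q, rfl⟩ := hd
  have hx : algebraMap K (Fld K) a⁻¹ ≠ 0 := by
    simpa using fun h => ha ((inv_eq_zero).mp ((algebraMap K (Fld K)).injective (by simp [h])))
  rw [lEv_mul _ _ _ hx]
  have h1 : lEv K (1 - LaurentPolynomial.C a * LaurentPolynomial.T 1)
      (algebraMap K (Fld K) a⁻¹) = 0 := by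
    have hone : (1 : LaurentPolynomial K) = AddMonoidAlgebra.single (0:ℤ) (1:K) := rfl
    have hCT : LaurentPolynomial.C a * LaurentPolynomial.T 1 = AddMonoidAlgebra.single (1:ℤ) a :=
      (LaurentPolynomial.single_eq_C_mul_T a 1).symm
    have hsub : lEv K (1 - LaurentPolynomial.C a * LaurentPolynomial.T 1)
        (algebraMap K (Fld K) a⁻¹)
        = lEv K 1 (algebraMap K (Fld K) a⁻¹)
          - lEv K (LaurentPolynomial.C a * LaurentPolynomial.T 1) (algebraMap K (Fld K) a⁻¹) := by
      rw [lEv_eq _ _ hx, lEv_eq _ _ hx, lEv_eq _ _ hx, map_sub]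
    rw [hsub, hone, hCT, lEv_single, lEv_single]
    simp only [map_one, one_mul, zpow_zero, zpow_one]
    rw [← map_mul, mul_inv_cancel₀ ha]
    simp
  rw [h1, zero_mul]

/-! ### transport of `evF` along ring homs of the field -/

lemma evF_ringHom {n : ℕ} (Θ : Fld K →+* Fld K)
    (hΘ : ∀ c : K, Θ (algebraMap K (Fld K) c) = algebraMap K (Fld K) c)
    (R : (Fin n → ℤ) →₀ K) (v : Fin n → Fld K) :
    Θ (evF K R v) = evF K R (fun i => Θ (v i)) := by
  unfold evF Finsupp.sum
  rw [map_sum]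
  apply Finset.sum_congr rfl
  intro e _
  rw [map_mul, hΘ, map_prod]
  congr 1
  apply Finset.prod_congr rfl
  intro i _
  exact map_zpow₀ Θ (v i) (e i)

lemma evF_perm {n : ℕ} (R : (Fin n → ℤ) →₀ K)
    (hsym : ∀ (σ : Equiv.Perm (Fin n)) (e : Fin n → ℤ), R (e ∘ σ) = R e)
    (ρ : Equiv.Perm (Fin n)) (v : Fin n → Fld K) :
    evF K R (fun i => v (ρ i)) = evF K R v := by
  unfold evF Finsupp.sum
  apply Finset.sum_nbij' (i := fun e => e ∘ ⇑ρ⁻¹) (j := fun e => e ∘ ⇑ρ)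
  · intro e he
    simp only [Finsupp.mem_support_iff] at he ⊢
    rwa [hsym ρ⁻¹ e]
  · intro e he
    simp only [Finsupp.mem_support_iff] at he ⊢
    rwa [hsym ρ e]
  · intro e _; funext i; simp
  · intro e _; funext i; simp
  · intro e _
    have h1 : R e = R (e ∘ ⇑ρ⁻¹) := by rw [hsym ρ⁻¹ e]
    simp only [Function.comp_apply]
    rw [← h1]
    congr 1
    rw [← Equiv.prod_comp ρ (fun j : Fin n => v j ^ e (ρ⁻¹ j))]
    apply Finset.prod_congr rfl
    intro i _
    simp

/-! ### renaming automorphisms -/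

def thetaOf (g : ℕ → ℕ) (hg : Function.Injective g) : Fld K →+* Fld K :=
  IsFractionRing.lift (g := (algebraMap (MvPolynomial ℕ K) (Fld K)).comp
    (MvPolynomial.rename g).toRingHom)
    (im_inj.comp (MvPolynomial.rename_injective g hg))

lemma thetaOf_ZZ (g : ℕ → ℕ) (hg : Function.Injective g) (i : ℕ) :
    thetaOf g hg (ZZ K i) = ZZ K (g i) := by
  unfold thetaOf ZZ
  rw [IsFractionRing.lift_algebraMap]
  simp [rename_X]

lemma thetaOf_algC (g : ℕ → ℕ) (hg : Function.Injective g) (c : K) :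
    thetaOf g hg (algebraMap K (Fld K) c) = algebraMap K (Fld K) c := by
  unfold thetaOf
  rw [tower_eq, IsFractionRing.lift_algebraMap]
  simp [rename_C, ← tower_eq]

/-! ### wheel values -/

def cKf (t : ℕ → K) (i : ℕ) : K := ∏ j ∈ Finset.Icc 2 (i+1), t j

def wv (k m : ℕ) (t : ℕ → K) (i : ℕ) : Fld K :=
  if i < k then algebraMap K (Fld K) (cKf t i) * ZZ K m else ZZ K i

variable {k m : ℕ} {t : ℕ → K}

lemma cKf_ne_zero (ht0 : ∀ j ∈ Finset.Icc 1 k, t j ≠ 0) {i : ℕ} (hik : i < k) :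
    cKf t i ≠ 0 := by
  apply Finset.prod_ne_zero_iff.mpr
  intro j hj
  rw [Finset.mem_Icc] at hj
  exact ht0 j (Finset.mem_Icc.mpr ⟨by omega, by omega⟩)

lemma cKf_succ (i : ℕ) : cKf t (i+1) = cKf t i * t (i+2) := by
  unfold cKf
  exact Finset.prod_Icc_succ_top (by omega) t

lemma cKf_mul {u v : ℕ} (huv : u < v) :
    cKf t v = cKf t u * ∏ j ∈ Finset.Icc (u+2) (v+1), t j := by
  unfold cKf
  rw [show (2:ℕ) = 1 + 1 from rfl, Finset.Icc_add_one_left_eq_Ioc, Finset.Icc_add_one_left_eq_Ioc, ← add_assoc, Finset.Icc_add_one_left_eq_Ioc,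
    ← Finset.prod_Ioc_consecutive t (by omega : 1 ≤ u+1) (by omega : u+1 ≤ v+1)]

lemma cKf_inj (ht0 : ∀ j ∈ Finset.Icc 1 k, t j ≠ 0)
    (htgen : ∀ c b : ℕ, 1 ≤ c → c < b → b ≤ k → ∏ j ∈ Finset.Icc (c + 1) b, t j ≠ 1)
    {u v : ℕ} (huv : u < v) (hv : v < k) : cKf t u ≠ cKf t v := by
  intro h
  have h2 := cKf_mul (t := t) huv
  rw [← h] at h2
  have hu : u < k := by omega
  have : (∏ j ∈ Finset.Icc (u+2) (v+1), t j) = 1 := by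
    have := cKf_ne_zero ht0 hu
    field_simp at h2
    exact h2.symm
  exact htgen (u+1) (v+1) (by omega) (by omega) (by omega) (by simpa using this)

lemma alg_ne_zero {c : K} (hc : c ≠ 0) : algebraMap K (Fld K) c ≠ 0 := by
  simpa using fun h => hc ((algebraMap K (Fld K)).injective (by simp [h]))

lemma wv_ne_zero (ht0 : ∀ j ∈ Finset.Icc 1 k, t j ≠ 0) (i : ℕ) : wv k m t i ≠ 0 := by
  unfold wv
  split
  · exact mul_ne_zero (alg_ne_zero (cKf_ne_zero ht0 (by assumption))) (ZZ_ne_zero m)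
  · exact ZZ_ne_zero i

lemma alg_mul_ZZ_ne {c : K} (hc : c ≠ 0) {u : ℕ} (hu : u ≠ m) :
    algebraMap K (Fld K) c * ZZ K m ≠ ZZ K u := by
  intro h
  rw [tower_eq] at h
  unfold ZZ at h
  rw [← map_mul] at h
  have h2 : MvPolynomial.C c * (X m : MvPolynomial ℕ K) = X u := im_inj h
  have h3 := congrArg (MvPolynomial.eval (fun a => if a = m then (0:K) else 1)) h2
  simp [hu] at h3

lemma wv_ne (ht0 : ∀ j ∈ Finset.Icc 1 k, t j ≠ 0)
    (htgen : ∀ c b : ℕ, 1 ≤ c → c < b → b ≤ k → ∏ j ∈ Finset.Icc (c + 1) b, t j ≠ 1)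
    {u v : ℕ} (hu : u < m) (hv : v < m) (huv : u ≠ v) :
    wv k m t v - wv k m t u ≠ 0 := by
  apply sub_ne_zero.mpr
  unfold wv
  split <;> split
  · -- both < k
    rename_i hvk huk
    intro h
    have hZ := ZZ_ne_zero (K := K) m
    have hcc : cKf t v = cKf t u := by
      apply (algebraMap K (Fld K)).injective
      exact mul_right_cancel₀ hZ h
    rcases Nat.lt_or_ge u v with h1 | h1
    · exact cKf_inj ht0 htgen h1 hvk hcc.symm
    · exact cKf_inj ht0 htgen (by omega) huk hcc
  · rename_i hvk huk
    exact alg_mul_ZZ_ne (cKf_ne_zero ht0 hvk) (by omega)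
  · rename_i hvk huk
    exact fun h => alg_mul_ZZ_ne (cKf_ne_zero ht0 huk) (by omega) h.symm
  · exact ZZ_ne (Ne.symm huv)

lemma wv_ratio (hk : 1 ≤ k) (hkm : k ≤ m)
    (ht0 : ∀ j ∈ Finset.Icc 1 k, t j ≠ 0)
    (htprod : ∏ j ∈ Finset.Icc 1 k, t j = 1)
    {b : ℕ} (hb : b < k) :
    ∃ a, a ∈ Finset.Icc 1 k ∧
      wv k m t b / wv k m t ((b+1) % k) = algebraMap K (Fld K) (t a)⁻¹ := by
  have hZ := ZZ_ne_zero (K := K) m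
  rcases Nat.lt_or_ge (b+1) k with hbk | hbk
  · refine ⟨b+2, Finset.mem_Icc.mpr ⟨by omega, by omega⟩, ?_⟩
    have hmod : (b+1) % k = b + 1 := Nat.mod_eq_of_lt hbk
    rw [hmod]
    unfold wv
    rw [if_pos hb, if_pos hbk, cKf_succ, map_mul, map_inv₀]
    have h1 := alg_ne_zero (cKf_ne_zero ht0 hb)
    have h2 := alg_ne_zero (ht0 (b+2) (Finset.mem_Icc.mpr ⟨by omega, by omega⟩))
    field_simp
  · have hbk' : b + 1 = k := by omega
    refine ⟨1, Finset.mem_Icc.mpr ⟨le_refl 1, hk⟩, ?_⟩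
    have hmod : (b+1) % k = 0 := by rw [hbk', Nat.mod_self]
    rw [hmod]
    unfold wv
    rw [if_pos hb, if_pos (by omega : 0 < k)]
    have hc0 : cKf t 0 = 1 := by
      unfold cKf
      rw [Finset.Icc_eq_empty (by omega), Finset.prod_empty]
    have hcb : t 1 * cKf t b = 1 := by
      rw [Finset.Icc_eq_cons_Ioc hk, Finset.prod_cons] at htprod
      rw [← htprod]
      congr 1
      unfold cKf
      rw [show (2:ℕ) = 1 + 1 from rfl, Finset.Icc_add_one_left_eq_Ioc, hbk']
    have hcbinv : cKf t b = (t 1)⁻¹ := eq_inv_of_mul_eq_one_right hcb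
    rw [hc0, hcbinv, map_one, one_mul, map_inv₀]
    rw [mul_div_assoc, div_self hZ, mul_one]

/-! ### the cyclic gap -/

lemma cyclic_gap (k : ℕ) (hk : 0 < k) (S : ℕ → Prop) (a b : ℕ) (ha : a < k) (hSa : S a)
    (hb : b < k) (hSb : ¬ S b) : ∃ c, c < k ∧ ¬ S c ∧ S ((c+1) % k) := by
  classical
  have hex : ∃ j, S ((b + j) % k) := by
    refine ⟨a + k - b, ?_⟩
    have h1 : b + (a + k - b) = a + k := by omega
    rw [h1, Nat.add_mod_right, Nat.mod_eq_of_lt ha]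
    exact hSa
  have hj0 : Nat.find hex ≠ 0 := by
    intro h0
    have := Nat.find_spec hex
    rw [h0, Nat.add_zero, Nat.mod_eq_of_lt hb] at this
    exact hSb this
  refine ⟨(b + (Nat.find hex - 1)) % k, Nat.mod_lt _ hk, Nat.find_min hex (by omega), ?_⟩
  have heq : ((b + (Nat.find hex - 1)) % k + 1) % k = (b + Nat.find hex) % k := by
    conv_rhs => rw [show b + Nat.find hex = b + (Nat.find hex - 1) + 1 by omega]
    rw [Nat.add_mod (b + (Nat.find hex - 1)) 1, Nat.add_mod ((b + (Nat.find hex - 1)) % k) 1,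
      Nat.mod_mod_of_dvd _ (dvd_refl k)]
  rw [heq]
  exact Nat.find_spec hex

/-! ### vanishing of `evF` when the wheel sits inside one block -/

lemma evF_wheel_vanish (k m : ℕ) (t : ℕ → K) {n : ℕ}
    (hkm : k ≤ m) (hnm : n ≤ m)
    (R : (Fin n → ℤ) →₀ K)
    (hsym : ∀ (σ : Equiv.Perm (Fin n)) (e : Fin n → ℤ), R (e ∘ σ) = R e)
    (hwheel : WheelCond K k t R)
    (τ : Fin n → Fin m) (hτ : Function.Injective τ)
    (hsurj : ∀ a : ℕ, a < k → ∃ x, (τ x).val = a) :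
    evF K R (fun i => wv k m t (τ i).val) = 0 := by
  classical
  -- k ≤ n
  have hkn : k ≤ n := by
    have hchoice : ∀ a : Fin k, ∃ x : Fin n, (τ x).val = a.val := fun a => hsurj a.val a.isLt
    choose F hF using hchoice
    have hFinj : Function.Injective F := by
      intro a b hab
      apply Fin.ext
      rw [← hF a, ← hF b, hab]
    simpa using Fintype.card_le_of_injective F hFinj
  -- the equivalence between wheel slots and initial slots
  have hbij : Function.Bijective (fun x : {x : Fin n // (τ x).val < k} =>
      (⟨⟨(τ x.1).val, lt_of_lt_of_le x.2 hkn⟩, x.2⟩ : {i : Fin n // i.val < k})) := by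
    constructor
    · intro x y hxy
      apply Subtype.ext
      apply hτ
      apply Fin.ext
      have := congrArg (fun z : {i : Fin n // i.val < k} => (z.1 : Fin n).val) hxy
      simpa using this
    · rintro ⟨i, hi⟩
      obtain ⟨x, hx⟩ := hsurj i.val hi
      refine ⟨⟨x, by rw [hx]; exact hi⟩, ?_⟩
      apply Subtype.ext
      apply Fin.ext
      simpa using hx
  let e := Equiv.ofBijective _ hbij
  let ρ : Equiv.Perm (Fin n) := e.symm.extendSubtype
  have hρ1 : ∀ (i : Fin n) (hi : i.val < k), (τ (ρ i)).val = i.val := by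
    intro i hi
    have h1 : ρ i = (e.symm ⟨i, hi⟩ : {x : Fin n // (τ x).val < k}).1 :=
      e.symm.extendSubtype_apply_of_mem i hi
    have h2 : e (e.symm ⟨i, hi⟩) = ⟨i, hi⟩ := e.apply_symm_apply _
    have h3 := congrArg (fun z : {i : Fin n // i.val < k} => (z.1 : Fin n).val) h2
    rw [h1]
    exact h3
  have hρ2 : ∀ (i : Fin n), ¬ (i.val < k) → ¬ ((τ (ρ i)).val < k) := by
    intro i hi
    have h1 : ρ i = (e.symm.toCompl ⟨i, hi⟩ : {x : Fin n // ¬ (τ x).val < k}).1 :=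
      e.symm.extendSubtype_apply_of_not_mem i hi
    rw [h1]
    exact (e.symm.toCompl ⟨i, hi⟩).2
  -- the renaming map
  set gm : ℕ → ℕ := fun a =>
    if a < k then a
    else if h : a < n then (τ (ρ ⟨a, h⟩)).val
    else if a = n then m else a + m + 1 with hgm
  have hclass : ∀ c, (c < k ∧ gm c = c) ∨
      (¬ c < k ∧ ∃ h : c < n, gm c = (τ (ρ ⟨c, h⟩)).val ∧ k ≤ gm c ∧ gm c < m) ∨
      (c = n ∧ gm c = m) ∨ (n < c ∧ gm c = c + m + 1) := by
    intro c
    by_cases h1 : c < k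
    · exact Or.inl ⟨h1, by simp [hgm, h1]⟩
    · by_cases h2 : c < n
      · refine Or.inr (Or.inl ⟨h1, h2, by simp [hgm, h1, h2], ?_, ?_⟩)
        · simp only [hgm, h1, h2, if_neg, dif_pos, if_false]
          have := hρ2 ⟨c, h2⟩ h1
          omega
        · simp only [hgm, h1, h2, if_neg, dif_pos, if_false]
          exact (τ (ρ ⟨c, h2⟩)).isLt
      · by_cases h3 : c = n
        · refine Or.inr (Or.inr (Or.inl ⟨h3, ?_⟩))
          subst h3
          simp [hgm, h1]
        · refine Or.inr (Or.inr (Or.inr ⟨by omega, by simp [hgm, h1, h2, h3]⟩))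
  have hgm_inj : Function.Injective gm := by
    intro a b hab
    rcases hclass a with ⟨ha1, ha2⟩ | ⟨ha1, ha2, ha3, ha4, ha5⟩ | ⟨ha1, ha2⟩ | ⟨ha1, ha2⟩ <;>
      rcases hclass b with ⟨hb1, hb2⟩ | ⟨hb1, hb2, hb3, hb4, hb5⟩ | ⟨hb1, hb2⟩ | ⟨hb1, hb2⟩
    · omega
    · omega
    · omega
    · omega
    · omega
    · -- both in the τ∘ρ region
      rw [ha3, hb3] at hab
      have h4 : τ (ρ ⟨a, ha2⟩) = τ (ρ ⟨b, hb2⟩) := Fin.ext hab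
      have h5 := ρ.injective (hτ h4)
      have := congrArg Fin.val h5
      simpa using this
    · omega
    · omega
    · omega
    · omega
    · omega
    · omega
    · omega
    · omega
    · omega
    · omega
  -- transport the wheel condition
  have h0 := hwheel hkn
  have h1 := congrArg (thetaOf gm hgm_inj) h0
  rw [map_zero, evF_ringHom _ (thetaOf_algC gm hgm_inj) R] at h1
  rw [← evF_perm R hsym ρ]
  have hpt : (fun i : Fin n => wv k m t (τ (ρ i)).val) = (fun a : Fin n =>
      thetaOf gm hgm_inj ((fun a : Fin n =>
        if a.val < k then
          algebraMap K (Fld K) (∏ j ∈ Finset.Icc 2 (a.val + 1), t j) * ZZ K n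
        else ZZ K a.val) a)) := by
    funext i
    show wv k m t (τ (ρ i)).val = thetaOf gm hgm_inj
      (if (i : ℕ) < k then
        algebraMap K (Fld K) (∏ j ∈ Finset.Icc 2 ((i : ℕ) + 1), t j) * ZZ K n
      else ZZ K (i : ℕ))
    by_cases hi : i.val < k
    · rw [if_pos hi, map_mul, thetaOf_algC, thetaOf_ZZ]
      have hgmn : gm n = m := by
        have hnk : ¬ n < k := by omega
        simp only [hgm, if_neg hnk, lt_irrefl n, dite_false, dif_neg (lt_irrefl n), if_pos rfl]
        simp
      rw [hgmn]
      unfold wv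
      rw [if_pos (by rw [hρ1 i hi]; exact hi), hρ1 i hi]
      rfl
    · rw [if_neg hi, thetaOf_ZZ]
      have hgmi : gm i.val = (τ (ρ i)).val := by
        simp only [hgm, if_neg hi]
        rw [dif_pos i.isLt]
      rw [hgmi]
      unfold wv
      rw [if_neg (hρ2 i hi)]
  rw [hpt]
  exact h1

end S7

/-- Let `t 1, …, t k` be nonzero with `t 1 ⋯ t k = 1` and
`t (c+1) ⋯ t b ≠ 1` for all `1 ≤ c < b ≤ k`, and let `p` be a one-variable Laurent
polynomial divisible by `1 − t a · x` for every `a ∈ {1,…,k}`.  If the symmetric Laurent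
polynomials `R` (in `n` variables) and `R'` (in `n'` variables) satisfy the wheel condition,
then so does the symmetric Laurent polynomial
`G = ∑_{σ ∈ S_{n+n'}} σ·[R·R'·∏ p(z_a/z_b) z_b/(z_b−z_a)]`
(i.e. any coefficient function `C` representing `G` satisfies the wheel condition). -/
theorem stmt7 (K : Type*) [Field K] [CharZero K] (k : ℕ) (hk : 1 ≤ k) (t : ℕ → K)
    (ht0 : ∀ j ∈ Finset.Icc 1 k, t j ≠ 0)
    (htprod : ∏ j ∈ Finset.Icc 1 k, t j = 1)
    (htgen : ∀ c b : ℕ, 1 ≤ c → c < b → b ≤ k → ∏ j ∈ Finset.Icc (c + 1) b, t j ≠ 1)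
    (p : LaurentPolynomial K)
    (hp : ∀ a ∈ Finset.Icc 1 k,
      ((1 : LaurentPolynomial K) - LaurentPolynomial.C (t a) * LaurentPolynomial.T 1) ∣ p)
    (n n' : ℕ)
    (R : (Fin n → ℤ) →₀ K) (R' : (Fin n' → ℤ) →₀ K)
    (hRsym : ∀ (σ : Equiv.Perm (Fin n)) (e : Fin n → ℤ), R (e ∘ σ) = R e)
    (hR'sym : ∀ (σ : Equiv.Perm (Fin n')) (e : Fin n' → ℤ), R' (e ∘ σ) = R' e)
    (hRwheel : WheelCond K k t R) (hR'wheel : WheelCond K k t R') :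
    ∀ C : (Fin (n + n') → ℤ) →₀ K,
      evF K C (fun i => ZZ K i.val) =
        (∑ σ : Equiv.Perm (Fin (n + n')),
          evF K R (fun i => ZZ K (σ (Fin.castAdd n' i)).val) *
            evF K R' (fun j => ZZ K (σ (Fin.natAdd n j)).val) *
            ∏ i : Fin n, ∏ j : Fin n',
              lEv K p (ZZ K (σ (Fin.castAdd n' i)).val / ZZ K (σ (Fin.natAdd n j)).val) *
                (ZZ K (σ (Fin.natAdd n j)).val /
                  (ZZ K (σ (Fin.natAdd n j)).val - ZZ K (σ (Fin.castAdd n' i)).val))) →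
      WheelCond K k t C := by
  classical
  intro C hC hkm
  -- the specialization homomorphism
  set W : ℕ → Fld K := S7.wv k (n + n') t with hW
  set ψ : MvPolynomial ℕ K →+* Fld K :=
    eval₂Hom (algebraMap K (Fld K)) (fun i => W i) with hψ
  have hψC : ∀ c : K, ψ (MvPolynomial.C c) = algebraMap K (Fld K) c := by
    intro c; simp [hψ]
  have hψX : ∀ i : ℕ, ψ (X i) = W i := by
    intro i; simp [hψ]
  have hzz : ∀ i : ℕ, S7.Spz ψ (ZZ K i) (W i) := by
    intro i
    have h := S7.spz_map (ψ := ψ) (X i)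
    rwa [hψX] at h
  have hw0 : ∀ i : ℕ, W i ≠ 0 := fun i => S7.wv_ne_zero ht0 i
  have hwne : ∀ u v : Fin (n + n'), u ≠ v → W v.val - W u.val ≠ 0 := by
    intro u v huv
    exact S7.wv_ne ht0 htgen u.isLt v.isLt (fun h => huv (Fin.ext h))
  have hcn : ∀ (σ : Equiv.Perm (Fin (n + n'))) (i : Fin n) (j : Fin n'),
      σ (Fin.castAdd n' i) ≠ σ (Fin.natAdd n j) := by
    intro σ i j h
    have h2 := σ.injective h
    have h3 := congrArg Fin.val h2
    simp only [Fin.coe_castAdd, Fin.coe_natAdd] at h3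
    have := i.isLt
    omega
  -- the specialized terms
  set T : Equiv.Perm (Fin (n + n')) → Fld K := fun σ =>
    evF K R (fun i => W (σ (Fin.castAdd n' i)).val) *
      evF K R' (fun j => W (σ (Fin.natAdd n j)).val) *
      ∏ i : Fin n, ∏ j : Fin n',
        lEv K p (W (σ (Fin.castAdd n' i)).val / W (σ (Fin.natAdd n j)).val) *
          (W (σ (Fin.natAdd n j)).val /
            (W (σ (Fin.natAdd n j)).val - W (σ (Fin.castAdd n' i)).val)) with hT
  -- Step A
  have hA : S7.Spz ψ (evF K C (fun i => ZZ K i.val)) (evF K C (fun i => W i.val)) :=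
    S7.spz_evF hψC C _ _ (fun i => hzz i.val) (fun i => hw0 i.val)
  -- Step B
  have hB : S7.Spz ψ (evF K C (fun i => ZZ K i.val)) (∑ σ : Equiv.Perm (Fin (n + n')), T σ) := by
    rw [hC]
    apply S7.spz_sum
    intro σ _
    refine S7.spz_mul (S7.spz_mul ?_ ?_) ?_
    · exact S7.spz_evF hψC R _ _ (fun i => hzz _) (fun i => hw0 _)
    · exact S7.spz_evF hψC R' _ _ (fun j => hzz _) (fun j => hw0 _)
    · refine S7.spz_prod _ _ _ fun i _ => S7.spz_prod _ _ _ fun j _ => S7.spz_mul ?_ ?_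
      · exact S7.spz_lEv hψC p (S7.spz_div (hzz _) (hzz _) (hw0 _))
          (div_ne_zero (hw0 _) (hw0 _))
      · exact S7.spz_div (hzz _) (S7.spz_sub (hzz _) (hzz _)) (hwne _ _ (hcn σ i j))
  -- Step C : each specialized term vanishes
  have hTzero : ∀ σ : Equiv.Perm (Fin (n + n')), T σ = 0 := by
    intro σ
    set slot : Fin k → Fin (n + n') := fun a => σ.symm (Fin.castLE hkm a) with hslot
    by_cases h1 : ∀ a : Fin k, (slot a).val < n
    · -- all wheel variables in the first block
      have hv : evF K R (fun i => W (σ (Fin.castAdd n' i)).val) = 0 := by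
        apply S7.evF_wheel_vanish k (n + n') t hkm (by omega) R hRsym hRwheel
          (fun i => σ (Fin.castAdd n' i))
        · intro i j h
          have h2 := σ.injective h
          exact Fin.ext (by simpa using congrArg Fin.val h2)
        · intro a ha
          refine ⟨⟨(slot ⟨a, ha⟩).val, h1 ⟨a, ha⟩⟩, ?_⟩
          have hca : Fin.castAdd n' ⟨(slot ⟨a, ha⟩).val, h1 ⟨a, ha⟩⟩ = slot ⟨a, ha⟩ :=
            Fin.ext (by simp)
          rw [hca, hslot, Equiv.apply_symm_apply]
          rfl
      rw [hT]
      simp only [hv, zero_mul]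
    · by_cases h2 : ∀ a : Fin k, ¬ ((slot a).val < n)
      · -- all wheel variables in the second block
        have hv : evF K R' (fun j => W (σ (Fin.natAdd n j)).val) = 0 := by
          apply S7.evF_wheel_vanish k (n + n') t hkm (by omega) R' hR'sym hR'wheel
            (fun j => σ (Fin.natAdd n j))
          · intro i j h
            have h2 := σ.injective h
            have h3 := congrArg Fin.val h2
            simp only [Fin.coe_natAdd] at h3
            exact Fin.ext (by omega)
          · intro a ha
            have hx := h2 ⟨a, ha⟩
            have hxlt := (slot ⟨a, ha⟩).isLt
            refine ⟨⟨(slot ⟨a, ha⟩).val - n, by omega⟩, ?_⟩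
            have hca : Fin.natAdd n ⟨(slot ⟨a, ha⟩).val - n, by omega⟩ = slot ⟨a, ha⟩ :=
              Fin.ext (by simp; omega)
            rw [hca, hslot, Equiv.apply_symm_apply]
            rfl
        rw [hT]
        simp only [hv, mul_zero, zero_mul]
      · -- mixed case
        push_neg at h1 h2
        obtain ⟨a0, hSa0⟩ := h1
        obtain ⟨b0, hFb0⟩ := h2
        set S : ℕ → Prop := fun a => ∃ h : a < k, ¬ ((slot ⟨a, h⟩).val < n) with hS
        have hSa0' : S a0.val := ⟨a0.isLt, by rw [Fin.eta]; omega⟩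
        have hFb0' : ¬ S b0.val := by
          rintro ⟨h, hh⟩
          exact hh (by rw [Fin.eta]; exact hFb0)
        obtain ⟨c, hck, hSc, hSc1⟩ :=
          S7.cyclic_gap k (by omega) S a0.val b0.val a0.isLt hSa0' b0.isLt hFb0'
        obtain ⟨hc'k, hge⟩ := hSc1
        have hlt : (slot ⟨c, hck⟩).val < n := by
          by_contra hh
          exact hSc ⟨hck, hh⟩
        have hxlt := (slot ⟨(c+1) % k, hc'k⟩).isLt
        set i₀ : Fin n := ⟨(slot ⟨c, hck⟩).val, hlt⟩ with hi₀
        set j₀ : Fin n' := ⟨(slot ⟨(c+1) % k, hc'k⟩).val - n, by omega⟩ with hj₀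
        have key1 : (σ (Fin.castAdd n' i₀)).val = c := by
          have hca : Fin.castAdd n' i₀ = slot ⟨c, hck⟩ := Fin.ext (by simp [hi₀])
          rw [hca, hslot, Equiv.apply_symm_apply]
          rfl
        have key2 : (σ (Fin.natAdd n j₀)).val = (c+1) % k := by
          have hca : Fin.natAdd n j₀ = slot ⟨(c+1) % k, hc'k⟩ := by
            apply Fin.ext
            simp only [Fin.coe_natAdd, hj₀]
            omega
          rw [hca, hslot, Equiv.apply_symm_apply]
          rfl
        obtain ⟨a, haIcc, hratio⟩ :=
          S7.wv_ratio (k := k) (m := n + n') (t := t) hk hkm ht0 htprod hck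
        have hlev : lEv K p (W (σ (Fin.castAdd n' i₀)).val / W (σ (Fin.natAdd n j₀)).val) = 0 := by
          rw [key1, key2, hW, hratio]
          exact S7.lEv_vanish (ht0 a haIcc) (hp a haIcc)
        rw [hT]
        have hprod : (∏ i : Fin n, ∏ j : Fin n',
            lEv K p (W (σ (Fin.castAdd n' i)).val / W (σ (Fin.natAdd n j)).val) *
              (W (σ (Fin.natAdd n j)).val /
                (W (σ (Fin.natAdd n j)).val - W (σ (Fin.castAdd n' i)).val))) = 0 := by
          apply Finset.prod_eq_zero (Finset.mem_univ i₀)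
          apply Finset.prod_eq_zero (Finset.mem_univ j₀)
          rw [hlev, zero_mul]
        simp only [hprod, mul_zero]
  -- conclusion
  have hsum : (∑ σ : Equiv.Perm (Fin (n + n')), T σ) = 0 :=
    Finset.sum_eq_zero fun σ _ => hTzero σ
  rw [hsum] at hB
  show evF K C (fun a => W a.val) = 0
  exact S7.spz_unique hA hB

end
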